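/- Let h : [0,∞) → [0,∞) be a non-increasing measurable function, let 0 < α₁ ≤ α₂ < ∞ and r > 0. Then there is a constant c depending only on α₁, α₂, r such that for every λ ≥ 0, (∫_λ^∞ (μ^r h(μ))^{α₂} dμ/μ)^{1/α₂} ≤ λ^r h(λ) + c (∫_λ^∞ (μ^r h(μ))^{α₁} dμ/μ)^{1/α₁}. -/

import Mathlib

open MeasureTheory ENNReal Set Filter

private lemma young_aux (x y : ℝ≥0∞) (s t : ℝ) (hs : 0 ≤ s) (ht : 0 ≤ t) :
    x ^ s * y ^ t ≤ (x + y) ^ (s + t) := by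
  rw [ENNReal.rpow_add_of_nonneg s t hs ht]
  exact mul_le_mul' (ENNReal.rpow_le_rpow le_self_add hs) (ENNReal.rpow_le_rpow le_add_self ht)

private lemma young (x y e : ℝ≥0∞) (θ : ℝ) (hθ0 : 0 < θ) (hθ1 : θ < 1) (he0 : e ≠ 0)
    (het : e ≠ ⊤) :
    x ^ (1-θ) * y ^ θ ≤ e * x + e ^ (-((1-θ)/θ)) * y := by
  set f := e ^ (-((1-θ)/θ)) with hf
  have h1 : e ^ (1-θ) * f ^ θ = 1 := by
    have h2 : f ^ θ = e ^ (-(1-θ)) := by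
      rw [hf, ← ENNReal.rpow_mul]
      congr 1
      field_simp
    rw [h2, ← ENNReal.rpow_add _ _ he0 het]
    simp
  calc x ^ (1-θ) * y ^ θ = (e ^ (1-θ) * f ^ θ) * (x ^ (1-θ) * y ^ θ) := by rw [h1, one_mul]
    _ = (e*x) ^ (1-θ) * (f*y) ^ θ := by
        rw [ENNReal.mul_rpow_of_nonneg _ _ (by linarith : (0:ℝ) ≤ 1-θ),
          ENNReal.mul_rpow_of_nonneg _ _ hθ0.le]
        ring
    _ ≤ (e*x + f*y) ^ ((1-θ) + θ) := young_aux _ _ _ _ (by linarith) hθ0.le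
    _ = e*x + f*y := by rw [show (1-θ)+θ = 1 by ring, ENNReal.rpow_one]

/-- Reverse-Hölder type inequality for tail integrals of non-increasing functions. -/
theorem reverse_holder_tail (α₁ α₂ r : ℝ) (hα₁ : 0 < α₁) (hα₁₂ : α₁ ≤ α₂) (hr : 0 < r) :
    ∃ c : ℝ≥0∞, 0 < c ∧ c ≠ ⊤ ∧
      ∀ h : ℝ → ℝ≥0∞, Measurable h → AntitoneOn h (Ici 0) →
        ∀ l : ℝ, 0 ≤ l →
          (∫⁻ m in Ioi l, (ENNReal.ofReal m ^ r * h m) ^ α₂ / ENNReal.ofReal m) ^ (1/α₂)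
            ≤ ENNReal.ofReal l ^ r * h l +
              c * (∫⁻ m in Ioi l, (ENNReal.ofReal m ^ r * h m) ^ α₁ / ENNReal.ofReal m) ^ (1/α₁) := by
  rcases eq_or_lt_of_le hα₁₂ with rfl | hlt
  · exact ⟨1, one_pos, one_ne_top, fun h _ _ l _ => by rw [one_mul]; exact le_add_self⟩
  have hα₂ : 0 < α₂ := hα₁.trans hlt
  set a := r * α₁ with ha_def
  have ha : 0 < a := mul_pos hr hα₁
  set θ := α₁ / α₂ with hθ_def
  have hθ0 : 0 < θ := div_pos hα₁ hα₂
  have hθ1 : θ < 1 := (div_lt_one hα₂).2 hlt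
  set K₁ : ℝ≥0∞ := ENNReal.ofReal ((2:ℝ) ^ (1/α₁)) with hK₁
  set K₂ : ℝ≥0∞ := ENNReal.ofReal ((2*a) ^ (1/α₁)) with hK₂
  have hK₁0 : K₁ ≠ 0 := by
    rw [hK₁, Ne, ENNReal.ofReal_eq_zero, not_le]
    positivity
  have hK₁t : K₁ ≠ ⊤ := ofReal_ne_top
  have hK₂0 : K₂ ≠ 0 := by
    rw [hK₂, Ne, ENNReal.ofReal_eq_zero, not_le]
    positivity
  have hK₂t : K₂ ≠ ⊤ := ofReal_ne_top
  have hexp : (0:ℝ) ≤ (1-θ)/θ := div_nonneg (by linarith) hθ0.le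
  refine ⟨K₁⁻¹ * K₂ + K₁ ^ ((1-θ)/θ), ?_, ?_, ?_⟩
  · exact lt_of_lt_of_le (ENNReal.rpow_pos (pos_iff_ne_zero.2 hK₁0) hK₁t) le_add_self
  · exact ENNReal.add_ne_top.2 ⟨ENNReal.mul_ne_top (ENNReal.inv_ne_top.2 hK₁0) hK₂t,
      ENNReal.rpow_ne_top_of_nonneg hexp hK₁t⟩
  intro h hmeas hanti l hl
  set X : ℝ → ℝ≥0∞ := fun m => ENNReal.ofReal m ^ r * h m with hX
  have hXm : Measurable X := (ENNReal.measurable_ofReal.pow_const r).mul hmeas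
  set I₁ := ∫⁻ m in Ioi l, X m ^ α₁ / ENNReal.ofReal m with hI₁
  set J₁ := I₁ ^ (1/α₁) with hJ₁
  set A := ENNReal.ofReal l ^ r * h l with hA
  set M := K₁ * A + K₂ * J₁ with hM
  have hf₁m : Measurable fun m => X m ^ α₁ / ENNReal.ofReal m :=
    (hXm.pow_const α₁).div ENNReal.measurable_ofReal
  -- Step 1: uniform bound on X on (l, ∞)
  have step1 : ∀ μ ∈ Ioi l, X μ ≤ M := by
    intro μ hμ
    have hlμ : l < μ := hμ
    have hμ0 : 0 < μ := lt_of_le_of_lt hl hlμ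
    by_cases hc : μ ^ a ≤ 2 * l ^ a
    · -- close to l : use monotonicity
      have hμle : μ ≤ 2 ^ (1/a) * l := by
        have h1 : μ = (μ ^ a) ^ (1/a) := by
          rw [← Real.rpow_mul hμ0.le, mul_one_div, div_self ha.ne', Real.rpow_one]
        have h2 : (μ^a) ^ (1/a) ≤ (2 * l^a) ^ (1/a) :=
          Real.rpow_le_rpow (Real.rpow_nonneg hμ0.le _) hc (by positivity)
        have h3 : (2 * l^a) ^ (1/a) = 2 ^ (1/a) * l := by
          rw [Real.mul_rpow (by norm_num) (Real.rpow_nonneg hl _),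
            ← Real.rpow_mul hl, mul_one_div, div_self ha.ne', Real.rpow_one]
        rw [h3] at h2
        exact h1 ▸ h2
      have hh : h μ ≤ h l := hanti hl (hl.trans hlμ.le) hlμ.le
      have hXK : X μ ≤ K₁ * A := by
        calc X μ ≤ ENNReal.ofReal (2 ^ (1/a) * l) ^ r * h l :=
              mul_le_mul' (ENNReal.rpow_le_rpow (ENNReal.ofReal_le_ofReal hμle) hr.le) hh
          _ = K₁ * A := by
              rw [ENNReal.ofReal_mul (by positivity), ENNReal.mul_rpow_of_nonneg _ _ hr.le,
                hA, hK₁, ENNReal.ofReal_rpow_of_pos (by positivity),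
                ← Real.rpow_mul (by norm_num : (0:ℝ) ≤ 2),
                show 1/a * r = 1/α₁ by field_simp [ha_def]; exact ha_def.symm]
              ring
      exact hXK.trans le_self_add
    · push_neg at hc
      have key1 : h μ ^ α₁ * ENNReal.ofReal ((μ^a - l^a)/a) ≤ I₁ := by
        have hle : ∫⁻ ν in Ioo l μ, h μ ^ α₁ * ENNReal.ofReal (ν ^ (a-1))
            ≤ ∫⁻ ν in Ioo l μ, X ν ^ α₁ / ENNReal.ofReal ν := by
          refine setLIntegral_mono hf₁m (fun ν hν => ?_)
          have hν0 : 0 < ν := lt_of_le_of_lt hl hν.1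
          have hνne : ENNReal.ofReal ν ≠ 0 := by
            rw [Ne, ENNReal.ofReal_eq_zero, not_le]; exact hν0
          have e1 : X ν ^ α₁ = ENNReal.ofReal ν ^ a * h ν ^ α₁ := by
            rw [hX, ENNReal.mul_rpow_of_nonneg _ _ hα₁.le, ← ENNReal.rpow_mul]
          have e2 : ENNReal.ofReal ν ^ a * h ν ^ α₁ / ENNReal.ofReal ν
              = h ν ^ α₁ * ENNReal.ofReal (ν ^ (a-1)) := by
            rw [div_eq_mul_inv, ← ENNReal.rpow_neg_one (ENNReal.ofReal ν),
              ← ENNReal.ofReal_rpow_of_pos hν0,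
              show a - 1 = a + (-1) by ring, ENNReal.rpow_add _ _ hνne ofReal_ne_top]
            ring
          rw [e1, e2]
          have hhν : h μ ≤ h ν := hanti (hl.trans hν.1.le) (hμ0.le) hν.2.le
          exact mul_le_mul' (ENNReal.rpow_le_rpow hhν hα₁.le) le_rfl
        have hInt : IntegrableOn (fun ν : ℝ => ν ^ (a-1)) (Ioo l μ) :=
          ((intervalIntegrable_iff_integrableOn_Ioc_of_le hlμ.le).1
            (intervalIntegral.intervalIntegrable_rpow' (by linarith))).mono_set Ioo_subset_Ioc_self
        have hNonneg : 0 ≤ᵐ[volume.restrict (Ioo l μ)] fun ν : ℝ => ν ^ (a-1) :=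
          (ae_restrict_iff' measurableSet_Ioo).2
            (ae_of_all _ fun ν hν => Real.rpow_nonneg (hl.trans hν.1.le) _)
        have hcomp : ∫⁻ ν in Ioo l μ, h μ ^ α₁ * ENNReal.ofReal (ν ^ (a-1))
            = h μ ^ α₁ * ENNReal.ofReal ((μ^a - l^a)/a) := by
          rw [lintegral_const_mul _
            (by measurability : Measurable fun ν : ℝ => ENNReal.ofReal (ν ^ (a-1)))]
          congr 1
          rw [← ofReal_integral_eq_lintegral_ofReal hInt hNonneg]
          congr 1
          rw [show ∫ ν in Ioo l μ, ν ^ (a-1) = ∫ ν in Ioc l μ, ν ^ (a-1) from by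
              rw [Measure.restrict_congr_set Ioo_ae_eq_Ioc],
            ← intervalIntegral.integral_of_le hlμ.le,
            integral_rpow (Or.inl (by linarith : (-1:ℝ) < a - 1)),
            show a - 1 + 1 = a by ring]
        calc h μ ^ α₁ * ENNReal.ofReal ((μ^a - l^a)/a)
            = ∫⁻ ν in Ioo l μ, h μ ^ α₁ * ENNReal.ofReal (ν ^ (a-1)) := hcomp.symm
          _ ≤ ∫⁻ ν in Ioo l μ, X ν ^ α₁ / ENNReal.ofReal ν := hle
          _ ≤ I₁ := lintegral_mono_set Ioo_subset_Ioi_self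
      have key2 : X μ ^ α₁ ≤ ENNReal.ofReal (2*a) * I₁ := by
        have e1 : X μ ^ α₁ = h μ ^ α₁ * ENNReal.ofReal (μ ^ a) := by
          rw [hX, ENNReal.mul_rpow_of_nonneg _ _ hα₁.le, ← ENNReal.rpow_mul,
            ENNReal.ofReal_rpow_of_pos hμ0]
          ring
        have hhalf : μ^a / (2*a) ≤ (μ^a - l^a)/a := by
          rw [div_le_div_iff₀ (by positivity) ha]
          nlinarith [Real.rpow_nonneg hl a, Real.rpow_nonneg hμ0.le a]
        have h2a0 : ENNReal.ofReal (2*a) ≠ 0 := by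
          rw [Ne, ENNReal.ofReal_eq_zero, not_le]; positivity
        calc X μ ^ α₁ = h μ ^ α₁ * ENNReal.ofReal (μ^a) := e1
          _ = (h μ ^ α₁ * ENNReal.ofReal (μ^a / (2*a))) * ENNReal.ofReal (2*a) := by
              rw [ENNReal.ofReal_div_of_pos (by positivity), mul_assoc,
                ENNReal.div_mul_cancel h2a0 ofReal_ne_top]
          _ ≤ (h μ ^ α₁ * ENNReal.ofReal ((μ^a - l^a)/a)) * ENNReal.ofReal (2*a) :=
              mul_le_mul' (mul_le_mul' le_rfl (ENNReal.ofReal_le_ofReal hhalf)) le_rfl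
          _ ≤ I₁ * ENNReal.ofReal (2*a) := mul_le_mul' key1 le_rfl
          _ = ENNReal.ofReal (2*a) * I₁ := mul_comm _ _
      have hXK : X μ ≤ K₂ * J₁ := by
        have h4 := ENNReal.rpow_le_rpow key2 (by positivity : (0:ℝ) ≤ 1/α₁)
        rw [← ENNReal.rpow_mul, mul_one_div, div_self hα₁.ne', ENNReal.rpow_one,
          ENNReal.mul_rpow_of_nonneg _ _ (by positivity : (0:ℝ) ≤ 1/α₁),
          ENNReal.ofReal_rpow_of_pos (by positivity)] at h4
        exact h4
      exact hXK.trans le_add_self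
  -- Step 2
  have step2 : (∫⁻ m in Ioi l, X m ^ α₂ / ENNReal.ofReal m) ≤ M ^ (α₂ - α₁) * I₁ := by
    have e : ∀ m ∈ Ioi l, X m ^ α₂ / ENNReal.ofReal m
        = X m ^ (α₂ - α₁) * (X m ^ α₁ / ENNReal.ofReal m) := by
      intro m _
      rw [← mul_div_assoc, ← ENNReal.rpow_add_of_nonneg _ _ (by linarith) hα₁.le,
        sub_add_cancel]
    rw [setLIntegral_congr_fun measurableSet_Ioi e]
    calc ∫⁻ m in Ioi l, X m ^ (α₂-α₁) * (X m ^ α₁ / ENNReal.ofReal m)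
        ≤ ∫⁻ m in Ioi l, M ^ (α₂-α₁) * (X m ^ α₁ / ENNReal.ofReal m) :=
          setLIntegral_mono (hf₁m.const_mul _)
            (fun m hm => mul_le_mul' (ENNReal.rpow_le_rpow (step1 m hm) (by linarith)) le_rfl)
      _ = M ^ (α₂-α₁) * I₁ := lintegral_const_mul _ hf₁m
  -- Step 3
  have hJ₂ : (∫⁻ m in Ioi l, X m ^ α₂ / ENNReal.ofReal m) ^ (1/α₂) ≤ M ^ (1-θ) * J₁ ^ θ := by
    calc (∫⁻ m in Ioi l, X m ^ α₂ / ENNReal.ofReal m) ^ (1/α₂)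
        ≤ (M ^ (α₂-α₁) * I₁) ^ (1/α₂) := ENNReal.rpow_le_rpow step2 (by positivity)
      _ = M ^ (1-θ) * J₁ ^ θ := by
          rw [ENNReal.mul_rpow_of_nonneg _ _ (by positivity : (0:ℝ) ≤ 1/α₂),
            ← ENNReal.rpow_mul]
          congr 1
          · congr 1
            rw [hθ_def]
            field_simp
          · rw [hJ₁, ← ENNReal.rpow_mul]
            congr 1
            rw [hθ_def]
            field_simp
  -- Step 4: Young's inequality and conclusion
  have hy := young M J₁ K₁⁻¹ θ hθ0 hθ1 (ENNReal.inv_ne_zero.2 hK₁t) (ENNReal.inv_ne_top.2 hK₁0)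
  rw [ENNReal.inv_rpow, ENNReal.rpow_neg, inv_inv] at hy
  refine hJ₂.trans (hy.trans ?_)
  rw [hM, mul_add, ← mul_assoc, ENNReal.inv_mul_cancel hK₁0 hK₁t, one_mul]
  refine le_of_eq ?_
  ring
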